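/- For every N ∈ ℕ and every h ∈ ℝ, the map β ↦ 𝔼[log Z_{N,ω}(β,h)] is non-increasing on [0,∞); equivalently, for every β ≥ 0, (∂/∂β) 𝔼[log Z_{N,ω}(β,h)] = 𝔼[(∂/∂β) log Z_{N,ω}(β,h)] ≤ 0. -/

import Mathlib

open MeasureTheory ProbabilityTheory Filter Set Real
open scoped ENNReal NNReal Topology BigOperators

noncomputable section

attribute [local instance] Classical.propDecidable

/-- `L : (0,∞) → (0,∞)` is slowly varying: measurable, positive on `(0,∞)`, and
`L(cx)/L(x) → 1` as `x → ∞` for every `c > 0`. -/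
def SlowlyVarying (L : ℝ → ℝ) : Prop :=
  Measurable L ∧ (∀ x : ℝ, 0 < x → 0 < L x) ∧
    ∀ c : ℝ, 0 < c → Tendsto (fun x => L (c * x) / L x) atTop (nhds 1)

variable {Ω₁ Ω₂ : Type*}

/-- `(P, τ)` is a (persistent, non-delayed, discrete) renewal process with inter-arrival
law `K`: `τ 0 = 0` and the increments `τ (j+1) - τ j` are IID `ℕ`-valued (`≥ 1`, which is
encoded by strict monotonicity of `j ↦ τ j`) with common law `K`. -/
def IsRenewal [MeasurableSpace Ω₁] (P : Measure Ω₁) (τ : ℕ → Ω₁ → ℕ) (K : ℕ → ℝ) : Prop :=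
  IsProbabilityMeasure P ∧ (∀ x, τ 0 x = 0) ∧ (∀ j, Measurable (τ j)) ∧
  (∀ x, StrictMono fun j => τ j x) ∧
  iIndepFun (fun j x => τ (j + 1) x - τ j x) P ∧
  (∀ j, IdentDistrib (fun x => τ (j + 1) x - τ j x) (τ 1) P P) ∧
  (∀ n : ℕ, K n = (P {x | τ 1 x = n}).toReal)

/-- The disorder `(Q, ω)`: an IID sequence of centered real random variables with
unit variance and finite exponential moments. -/
def IsDisorder [MeasurableSpace Ω₂] (Q : Measure Ω₂) (ω : ℕ → Ω₂ → ℝ) : Prop :=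
  IsProbabilityMeasure Q ∧ (∀ n, Measurable (ω n)) ∧
  iIndepFun ω Q ∧ (∀ n, IdentDistrib (ω n) (ω 1) Q Q) ∧
  (∫ y, ω 1 y ∂Q) = 0 ∧ (∫ y, (ω 1 y) ^ 2 ∂Q) = 1 ∧
  (∀ t : ℝ, Integrable (fun y => Real.exp (t * ω 1 y)) Q)

/-- `K(n) = L(n)/n^(1+α)` for `n = 1, 2, …`. -/
def HasRegVaryingTail (K : ℕ → ℝ) (L : ℝ → ℝ) (α : ℝ) : Prop :=
  ∀ n : ℕ, 1 ≤ n → K n = L n / (n : ℝ) ^ (1 + α)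

/-- `δ_n = 1_{n ∈ τ}`. -/
def pinDelta (τ : ℕ → Ω₁ → ℕ) (n : ℕ) (x : Ω₁) : ℝ :=
  if ∃ j, τ j x = n then 1 else 0

/-- The moment generating function `M(t) = 𝔼[exp(t ω₁)]`. -/
def pinMgf [MeasurableSpace Ω₂] (Q : Measure Ω₂) (ω : ℕ → Ω₂ → ℝ) (t : ℝ) : ℝ :=
  ∫ y, Real.exp (t * ω 1 y) ∂Q

/-- The quenched partition function
`Z_{N,ω}(β,h) = E[exp (∑_{n=1}^N (β ω_n + h - log M(β)) δ_n) δ_N]`. -/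
def pinZ [MeasurableSpace Ω₁] [MeasurableSpace Ω₂] (P : Measure Ω₁) (Q : Measure Ω₂)
    (τ : ℕ → Ω₁ → ℕ) (ω : ℕ → Ω₂ → ℝ) (N : ℕ) (β h : ℝ) (y : Ω₂) : ℝ :=
  ∫ x, Real.exp (∑ n ∈ Finset.Icc 1 N,
      (β * ω n y + h - Real.log (pinMgf Q ω β)) * pinDelta τ n x) * pinDelta τ N x ∂P

/-- The pure (annealed, `β = 0`) partition function `Z_N(0,h) = E[exp(h ∑_{n=1}^N δ_n) δ_N]`. -/
def pinZpure [MeasurableSpace Ω₁] (P : Measure Ω₁) (τ : ℕ → Ω₁ → ℕ) (N : ℕ) (h : ℝ) : ℝ :=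
  ∫ x, Real.exp (h * ∑ n ∈ Finset.Icc 1 N, pinDelta τ n x) * pinDelta τ N x ∂P

/-- `F` is the quenched free energy:
`F β h = lim_{N→∞} (1/N) 𝔼[log Z_{N,ω}(β,h)]` for all `β, h` (the limit exists by
superadditivity). -/
def IsFreeEnergy [MeasurableSpace Ω₁] [MeasurableSpace Ω₂] (P : Measure Ω₁) (Q : Measure Ω₂)
    (τ : ℕ → Ω₁ → ℕ) (ω : ℕ → Ω₂ → ℝ) (F : ℝ → ℝ → ℝ) : Prop :=
  ∀ β h : ℝ, Tendsto
    (fun N : ℕ => (∫ y, Real.log (pinZ P Q τ ω N β h y) ∂Q) / N) atTop (nhds (F β h))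

/-- The critical point `h_c(β) = sup {h : F(β,h) = 0}`. -/
def pinHc (F : ℝ → ℝ → ℝ) (β : ℝ) : ℝ :=
  sSup {h : ℝ | F β h = 0}

/-- `L̃(x) = ∫_0^x dy / ((1+y) L(y)²)`. -/
def Ltilde (L : ℝ → ℝ) (x : ℝ) : ℝ :=
  ∫ y in (0:ℝ)..x, 1 / ((1 + y) * (L y) ^ 2)

/-- The coarse-graining length
`k(β; q, A) = inf {n ∈ ℕ : L̃(n)/L(n)^{2/(q-1)} ≥ A β^{-2q/(q-1)}}`. -/
def kCoarse (L : ℝ → ℝ) (q : ℕ) (A β : ℝ) : ℕ :=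
  sInf {n : ℕ | 1 ≤ n ∧
    A * β ^ (-(2 * (q : ℝ) / ((q : ℝ) - 1))) ≤ Ltilde L n / (L n) ^ ((2 : ℝ) / ((q : ℝ) - 1))}

/-- `Δ(β; q, A) = 1 / k(β; q, A)`. -/
def DeltaShift (L : ℝ → ℝ) (q : ℕ) (A β : ℝ) : ℝ :=
  ((kCoarse L q A β : ℝ))⁻¹

/-- `R_{1/2}(x) = 1/(√(x+1) 𝐋(x+1))`. -/
def R12 (Lbold : ℝ → ℝ) (x : ℝ) : ℝ := 1 / (Real.sqrt (x + 1) * Lbold (x + 1))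

/-- the `a`-th gap of the non-decreasing rearrangement of the tuple `i`. -/
def sortedGaps (q : ℕ) (i : Fin q → ℕ) (a : ℕ) : ℕ :=
  (List.insertionSort (· ≤ ·) (List.ofFn i)).getD (a + 1) 0 -
    (List.insertionSort (· ≤ ·) (List.ofFn i)).getD a 0

/-- `U(i) = ∏_{a=2}^q R_{1/2}(s(i)_a - s(i)_{a-1})`, `s(i)` being the non-decreasing
rearrangement of `i`. -/
def Usort (Lbold : ℝ → ℝ) {q : ℕ} (i : Fin q → ℕ) : ℝ :=
  ∏ a ∈ Finset.range (q - 1), R12 Lbold (sortedGaps q i a)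

/-- `V_k(i) = (q! k 𝐋̃(k)^{q-1})^{-1/2} U(i) 1{i has pairwise distinct coordinates}`. -/
def Vk (Lbold : ℝ → ℝ) (q k : ℕ) (i : Fin q → ℕ) : ℝ :=
  if Function.Injective i then
    (Real.sqrt ((q.factorial : ℝ) * k * (Ltilde Lbold k) ^ (q - 1)))⁻¹ * Usort Lbold i
  else 0

/-- `X_j = ∑_{i ∈ B_j^q} V_k(i - (j-1)k(1,…,1)) ω_{i_1} ⋯ ω_{i_q}`, as a function of the
disorder configuration `ω : ℕ → ℝ`. -/
def Xblock (Lbold : ℝ → ℝ) (q k j : ℕ) (ω : ℕ → ℝ) : ℝ :=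
  ∑ i : Fin q → Fin k, Vk Lbold q k (fun a => (i a : ℕ) + 1) *
    ∏ a : Fin q, ω ((j - 1) * k + ((i a : ℕ) + 1))

/-- `f_K(x) = -K 1{x ≥ exp(K²)}`. -/
def cutoffF (K x : ℝ) : ℝ := if Real.exp (K ^ 2) ≤ x then -K else 0

/-- the block `B_i = {(i-1)k+1, …, ik}`. -/
def Bblock (k i : ℕ) : Finset ℕ := Finset.Icc ((i - 1) * k + 1) (i * k)

/-- `E_I`: in `{1,…,km}` the renewal intersects exactly the blocks `B_i`, `i ∈ I`. -/
def EIset (τ : ℕ → Ω₁ → ℕ) (k m : ℕ) (I : Finset ℕ) : Set Ω₁ :=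
  {x | (∀ n ∈ Finset.Icc 1 (k * m), (∃ j, τ j x = n) → ∃ i ∈ I, n ∈ Bblock k i) ∧
       (∀ i ∈ I, ∃ n ∈ Bblock k i, ∃ j, τ j x = n)}

/-- `Ẑ_ω^I`, the partition function restricted to the event `E_I`. -/
def hatZI [MeasurableSpace Ω₁] [MeasurableSpace Ω₂] (P : Measure Ω₁) (Q : Measure Ω₂)
    (τ : ℕ → Ω₁ → ℕ) (ω : ℕ → Ω₂ → ℝ) (β h : ℝ) (k m : ℕ) (I : Finset ℕ) (y : Ω₂) : ℝ :=
  ∫ x, Real.exp (∑ n ∈ Finset.Icc 1 (k * m),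
      (β * ω n y + h - Real.log (pinMgf Q ω β)) * pinDelta τ n x)
    * pinDelta τ (k * m) x * (EIset τ k m I).indicator (fun _ => (1 : ℝ)) x ∂P

/-- `P_I = P(E_I ; N ∈ τ)` with `N = km`. -/
def PIprob [MeasurableSpace Ω₁] (P : Measure Ω₁) (τ : ℕ → Ω₁ → ℕ) (k m : ℕ)
    (I : Finset ℕ) : ℝ :=
  (P (EIset τ k m I ∩ {x | ∃ j, τ j x = k * m})).toReal

/-- `Z_{d,f}` at `h = 0`: the partition function on `{d+1,…,f}` pinned at `f`,
conditionally on `d ∈ τ`. -/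
def Zdf [MeasurableSpace Ω₁] [MeasurableSpace Ω₂] (P : Measure Ω₁) (Q : Measure Ω₂)
    (τ : ℕ → Ω₁ → ℕ) (ω : ℕ → Ω₂ → ℝ) (β : ℝ) (d f : ℕ) (y : Ω₂) : ℝ :=
  ∫ x, Real.exp (∑ n ∈ Finset.Icc (d + 1) f,
      (β * ω n y - Real.log (pinMgf Q ω β)) * pinDelta τ n x) * pinDelta τ f x
    ∂(P[|{x | ∃ j, τ j x = d}])

/-- the density of the tilted disorder law `P̂_τ(dω) = exp(∑_{n=d}^f (βω_n - log M(β)) δ_n) ℙ(dω)`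
with respect to `ℙ`, for a fixed renewal trajectory `x`. -/
def tiltDensity [MeasurableSpace Ω₂] (Q : Measure Ω₂) (τ : ℕ → Ω₁ → ℕ) (ω : ℕ → Ω₂ → ℝ)
    (β : ℝ) (d f : ℕ) (x : Ω₁) (y : Ω₂) : ℝ :=
  Real.exp (∑ n ∈ Finset.Icc d f, (β * ω n y - Real.log (pinMgf Q ω β)) * pinDelta τ n x)

/-- `Ê_τ X`, the mean of `X = X_1` under the tilted disorder law `P̂_τ`. -/
def EhatX [MeasurableSpace Ω₂] (Q : Measure Ω₂) (τ : ℕ → Ω₁ → ℕ) (ω : ℕ → Ω₂ → ℝ)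
    (Lbold : ℝ → ℝ) (q k : ℕ) (β : ℝ) (d f : ℕ) (x : Ω₁) : ℝ :=
  ∫ y, Xblock Lbold q k 1 (fun n => ω n y) * tiltDensity Q τ ω β d f x y ∂Q

/-- `∏_{j=1}^{|I|} (i_j - i_{j-1})^p` where `i_1 < ⋯ < i_{|I|}` are the elements of `I` and
`i_0 = 0`. -/
def gapProd (I : Finset ℕ) (p : ℝ) : ℝ :=
  ∏ j : Fin I.card,
    ((((I.orderIsoOfFin rfl j).1 -
      (if (j : ℕ) = 0 then 0
       else (I.orderIsoOfFin rfl ⟨(j : ℕ) - 1, lt_of_le_of_lt (Nat.sub_le _ _) j.2⟩).1)) : ℕ) : ℝ) ^ p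

namespace Stmt5

/-- the set of renewal points in `{1,…,N}` -/
def patD (τ : ℕ → Ω₁ → ℕ) (N : ℕ) (x : Ω₁) : Finset ℕ :=
  (Finset.Icc 1 N).filter (fun n => ∃ j, τ j x = n)

def patSet (τ : ℕ → Ω₁ → ℕ) (N : ℕ) (J : Finset ℕ) : Set Ω₁ :=
  {x | patD τ N x = J ∧ ∃ j, τ j x = N}

def patP [MeasurableSpace Ω₁] (P : Measure Ω₁) (τ : ℕ → Ω₁ → ℕ) (N : ℕ) (J : Finset ℕ) : ℝ :=
  (P (patSet τ N J)).toReal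

lemma patP_nonneg [MeasurableSpace Ω₁] (P : Measure Ω₁) (τ : ℕ → Ω₁ → ℕ) (N : ℕ)
    (J : Finset ℕ) : 0 ≤ patP P τ N J := ENNReal.toReal_nonneg

lemma measurableSet_mem [MeasurableSpace Ω₁] {τ : ℕ → Ω₁ → ℕ} (hτ : ∀ j, Measurable (τ j))
    (n : ℕ) : MeasurableSet {x : Ω₁ | ∃ j, τ j x = n} := by
  have : {x : Ω₁ | ∃ j, τ j x = n} = ⋃ j, (τ j) ⁻¹' {n} := by
    ext x; simp [Set.mem_iUnion]
  rw [this]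
  exact MeasurableSet.iUnion fun j => (hτ j) (measurableSet_singleton n)

lemma measurableSet_patSet [MeasurableSpace Ω₁] {τ : ℕ → Ω₁ → ℕ} (hτ : ∀ j, Measurable (τ j))
    (N : ℕ) (J : Finset ℕ) (hJ : J ⊆ Finset.Icc 1 N) : MeasurableSet (patSet τ N J) := by
  have h1 : {x : Ω₁ | patD τ N x = J}
      = ⋂ n ∈ Finset.Icc 1 N,
          (if n ∈ J then {x : Ω₁ | ∃ j, τ j x = n} else {x : Ω₁ | ∃ j, τ j x = n}ᶜ) := by
    ext x
    simp only [Set.mem_setOf_eq, Set.mem_iInter]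
    constructor
    · intro hx n hn
      by_cases hnJ : n ∈ J
      · rw [if_pos hnJ]
        rw [← hx] at hnJ
        exact (Finset.mem_filter.mp hnJ).2
      · rw [if_neg hnJ]
        intro hex
        exact hnJ (hx ▸ Finset.mem_filter.mpr ⟨hn, hex⟩)
    · intro hx
      ext n
      simp only [patD, Finset.mem_filter]
      constructor
      · rintro ⟨hn, hex⟩
        have h := hx n hn
        by_cases hnJ : n ∈ J
        · exact hnJ
        · rw [if_neg hnJ] at h
          exact absurd hex h
      · intro hnJ
        have hn := hJ hnJ
        refine ⟨hn, ?_⟩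
        have h := hx n hn
        rwa [if_pos hnJ] at h
  have h2 : patSet τ N J = {x : Ω₁ | patD τ N x = J} ∩ {x : Ω₁ | ∃ j, τ j x = N} := rfl
  rw [h2, h1]
  refine MeasurableSet.inter ?_ (measurableSet_mem hτ N)
  refine MeasurableSet.biInter (Finset.Icc 1 N : Finset ℕ).countable_toSet fun n _ => ?_
  by_cases hnJ : n ∈ J
  · rw [if_pos hnJ]; exact measurableSet_mem hτ n
  · rw [if_neg hnJ]; exact (measurableSet_mem hτ n).compl

lemma integral_pattern [MeasurableSpace Ω₁] (P : Measure Ω₁) [IsFiniteMeasure P]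
    (τ : ℕ → Ω₁ → ℕ) (hτ : ∀ j, Measurable (τ j)) (N : ℕ) (a : ℕ → ℝ) :
    ∫ x, Real.exp (∑ n ∈ Finset.Icc 1 N, a n * pinDelta τ n x) * pinDelta τ N x ∂P
      = ∑ J ∈ (Finset.Icc 1 N).powerset, Real.exp (∑ n ∈ J, a n) * patP P τ N J := by
  have hfun : ∀ x, Real.exp (∑ n ∈ Finset.Icc 1 N, a n * pinDelta τ n x) * pinDelta τ N x
      = ∑ J ∈ (Finset.Icc 1 N).powerset,
          Set.indicator (patSet τ N J) (fun _ => Real.exp (∑ n ∈ J, a n)) x := by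
    intro x
    by_cases hN : ∃ j, τ j x = N
    · have hmem : patD τ N x ∈ (Finset.Icc 1 N).powerset :=
        Finset.mem_powerset.mpr (Finset.filter_subset _ _)
      rw [Finset.sum_eq_single_of_mem (patD τ N x) hmem ?_]
      · have hx : x ∈ patSet τ N (patD τ N x) := ⟨rfl, hN⟩
        rw [Set.indicator_of_mem hx]
        have hs : ∑ n ∈ Finset.Icc 1 N, a n * pinDelta τ n x = ∑ n ∈ patD τ N x, a n := by
          rw [patD, Finset.sum_filter]
          refine Finset.sum_congr rfl fun n _ => ?_
          by_cases hn : ∃ j, τ j x = n <;> simp [pinDelta, hn]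
        rw [hs, pinDelta, if_pos hN, mul_one]
      · intro J _ hne
        apply Set.indicator_of_notMem
        intro hx
        exact hne hx.1.symm
    · rw [pinDelta, if_neg hN, mul_zero]
      symm
      refine Finset.sum_eq_zero fun J _ => ?_
      apply Set.indicator_of_notMem
      exact fun hx => hN hx.2
  rw [integral_congr_ae (Filter.Eventually.of_forall hfun), integral_finset_sum]
  · refine Finset.sum_congr rfl fun J hJ => ?_
    rw [integral_indicator_const _ (measurableSet_patSet hτ N J (Finset.mem_powerset.mp hJ)),
      smul_eq_mul, mul_comm]
    rfl
  · intro J hJ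
    exact (integrable_const _).indicator
      (measurableSet_patSet hτ N J (Finset.mem_powerset.mp hJ))

lemma sum_patP [MeasurableSpace Ω₁] (P : Measure Ω₁) [IsFiniteMeasure P]
    (τ : ℕ → Ω₁ → ℕ) (hτ : ∀ j, Measurable (τ j)) (N : ℕ) :
    ∑ J ∈ (Finset.Icc 1 N).powerset, patP P τ N J
      = (P {x | ∃ j, τ j x = N}).toReal := by
  have h := integral_pattern P τ hτ N (fun _ => 0)
  simp only [zero_mul, Finset.sum_const_zero, Real.exp_zero, one_mul] at h
  rw [← h]
  have : ∀ x : Ω₁, pinDelta τ N x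
      = Set.indicator {x : Ω₁ | ∃ j, τ j x = N} (fun _ => (1:ℝ)) x := by
    intro x
    by_cases hN : ∃ j, τ j x = N
    · rw [pinDelta, if_pos hN, Set.indicator_of_mem (show x ∈ {x : Ω₁ | ∃ j, τ j x = N} from hN)]
    · rw [pinDelta, if_neg hN,
        Set.indicator_of_notMem (show x ∉ {x : Ω₁ | ∃ j, τ j x = N} from hN)]
  rw [integral_congr_ae (Filter.Eventually.of_forall this),
    integral_indicator_const _ (measurableSet_mem hτ N), smul_eq_mul, mul_one]
  rfl

set_option linter.unusedSectionVars false


lemma le_exp_add (t : ℝ) : |t| ≤ Real.exp t + Real.exp (-t) := by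
  rcases le_or_gt 0 t with ht | ht
  · rw [abs_of_nonneg ht]
    have h1 := Real.add_one_le_exp t
    have h2 := (Real.exp_pos (-t)).le
    linarith
  · rw [abs_of_neg ht]
    have h1 := Real.add_one_le_exp (-t)
    have h2 := (Real.exp_pos t).le
    linarith

lemma exp_mul_le_of_between {a l u : ℝ} (t : ℝ) (hl : l ≤ a) (hu : a ≤ u) :
    Real.exp (a * t) ≤ Real.exp (u * t) + Real.exp (l * t) := by
  rcases le_or_gt 0 t with ht | ht
  · have : a * t ≤ u * t := mul_le_mul_of_nonneg_right hu ht
    have := Real.exp_le_exp.mpr this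
    have h2 := (Real.exp_pos (l * t)).le
    linarith
  · have : a * t ≤ l * t := mul_le_mul_of_nonpos_right hl ht.le
    have := Real.exp_le_exp.mpr this
    have h2 := (Real.exp_pos (u * t)).le
    linarith

lemma abs_mul_exp_le {b l u : ℝ} (t : ℝ) (hl : l ≤ b) (hu : b ≤ u) :
    |t * Real.exp (b * t)| ≤ 2 * (Real.exp ((u + 1) * t) + Real.exp ((l - 1) * t)) := by
  rw [abs_mul, abs_of_pos (Real.exp_pos _)]
  have h1 : |t| * Real.exp (b * t) ≤ (Real.exp t + Real.exp (-t)) * Real.exp (b * t) :=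
    mul_le_mul_of_nonneg_right (le_exp_add t) (Real.exp_pos _).le
  have h2 : (Real.exp t + Real.exp (-t)) * Real.exp (b * t)
      = Real.exp ((b + 1) * t) + Real.exp ((b - 1) * t) := by
    rw [add_mul, ← Real.exp_add, ← Real.exp_add]
    ring_nf
  have h3 : Real.exp ((b + 1) * t) ≤ Real.exp ((u + 1) * t) + Real.exp ((l - 1) * t) :=
    exp_mul_le_of_between t (by linarith) (by linarith)
  have h4 : Real.exp ((b - 1) * t) ≤ Real.exp ((u + 1) * t) + Real.exp ((l - 1) * t) :=
    exp_mul_le_of_between t (by linarith) (by linarith)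
  calc |t| * Real.exp (b * t) ≤ Real.exp ((b + 1) * t) + Real.exp ((b - 1) * t) := by
        rw [← h2]; exact h1
    _ ≤ 2 * (Real.exp ((u + 1) * t) + Real.exp ((l - 1) * t)) := by linarith

section Mgf

variable [MeasurableSpace Ω₂] (Q : Measure Ω₂) (ω : ℕ → Ω₂ → ℝ)
variable [IsProbabilityMeasure Q]

lemma pinMgf_pos (hint : ∀ t : ℝ, Integrable (fun y => Real.exp (t * ω 1 y)) Q) (b : ℝ) :
    0 < pinMgf Q ω b :=
  ProbabilityTheory.mgf_pos (X := ω 1) (μ := Q) (hint b)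

lemma integrable_omega (hm : ∀ n, Measurable (ω n))
    (hid : ∀ n, IdentDistrib (ω n) (ω 1) Q Q)
    (hint : ∀ t : ℝ, Integrable (fun y => Real.exp (t * ω 1 y)) Q) (n : ℕ) :
    Integrable (ω n) Q := by
  have h1 : Integrable (ω 1) Q := by
    refine Integrable.mono' ((hint 1).add (hint (-1))) (hm 1).aestronglyMeasurable ?_
    refine Filter.Eventually.of_forall fun y => ?_
    have := le_exp_add (ω 1 y)
    simpa [Real.norm_eq_abs, one_mul, neg_one_mul] using this
  exact (hid n).integrable_iff.mpr h1

lemma one_le_pinMgf (hm : ∀ n, Measurable (ω n))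
    (hid : ∀ n, IdentDistrib (ω n) (ω 1) Q Q)
    (hint : ∀ t : ℝ, Integrable (fun y => Real.exp (t * ω 1 y)) Q)
    (hcent : (∫ y, ω 1 y ∂Q) = 0) (b : ℝ) : 1 ≤ pinMgf Q ω b := by
  have hint1 : Integrable (fun y => b * ω 1 y + 1) Q :=
    ((integrable_omega Q ω hm hid hint 1).const_mul b).add (integrable_const 1)
  have h : (∫ y, (b * ω 1 y + 1) ∂Q) ≤ ∫ y, Real.exp (b * ω 1 y) ∂Q := by
    refine integral_mono hint1 (hint b) fun y => ?_
    exact Real.add_one_le_exp _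
  rwa [integral_add ((integrable_omega Q ω hm hid hint 1).const_mul b) (integrable_const 1),
    integral_const_mul, hcent, mul_zero, zero_add, integral_const, probReal_univ,
    smul_eq_mul, one_mul] at h

lemma hasDerivAt_pinMgf (hm : ∀ n, Measurable (ω n))
    (hint : ∀ t : ℝ, Integrable (fun y => Real.exp (t * ω 1 y)) Q) (b : ℝ) :
    HasDerivAt (fun t => pinMgf Q ω t) (∫ y, ω 1 y * Real.exp (b * ω 1 y) ∂Q) b := by
  have key := hasDerivAt_integral_of_dominated_loc_of_deriv_le (μ := Q)
    (F := fun t y => Real.exp (t * ω 1 y))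
    (F' := fun t y => ω 1 y * Real.exp (t * ω 1 y))
    (bound := fun y => 2 * (Real.exp ((b + 2) * ω 1 y) + Real.exp ((b - 2) * ω 1 y)))
    (x₀ := b) (Metric.ball_mem_nhds b one_pos)
    (Filter.Eventually.of_forall fun t =>
      (((hm 1).const_mul t).exp).aestronglyMeasurable)
    (hint b)
    (((hm 1).mul ((hm 1).const_mul b).exp).aestronglyMeasurable)
    ?_ (((hint (b + 2)).add (hint (b - 2))).const_mul 2) ?_
  · exact key.2
  · refine Filter.Eventually.of_forall fun y => fun t ht => ?_
    have hball : |t - b| < 1 := by simpa [Metric.mem_ball, Real.dist_eq] using ht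
    have hl : b - 1 ≤ t := by cases' abs_lt.mp hball with h1 h2; linarith
    have hu : t ≤ b + 1 := by cases' abs_lt.mp hball with h1 h2; linarith
    have := abs_mul_exp_le (b := t) (l := b - 1) (u := b + 1) (ω 1 y) hl hu
    rw [Real.norm_eq_abs, abs_mul, abs_of_pos (Real.exp_pos _)]
    rw [abs_mul, abs_of_pos (Real.exp_pos _)] at this
    have e2 : b - 1 - 1 = b - 2 := by ring
    have e3 : b + 1 + 1 = b + 2 := by ring
    rw [e2, e3] at this
    exact this
  · refine Filter.Eventually.of_forall fun y => fun t _ => ?_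
    have h := (hasDerivAt_mul_const (ω 1 y)).exp (x := t)
    simpa [mul_comm] using h

lemma norm_deriv_pinMgf_le (hm : ∀ n, Measurable (ω n))
    (hint : ∀ t : ℝ, Integrable (fun y => Real.exp (t * ω 1 y)) Q) (b : ℝ) :
    ∀ t ∈ Metric.ball b 1,
      |∫ y, ω 1 y * Real.exp (t * ω 1 y) ∂Q|
        ≤ ∫ y, 2 * (Real.exp ((b + 2) * ω 1 y) + Real.exp ((b - 2) * ω 1 y)) ∂Q := by
  intro t ht
  have hball : |t - b| < 1 := by simpa [Metric.mem_ball, Real.dist_eq] using ht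
  have hl : b - 1 ≤ t := by cases' abs_lt.mp hball with h1 h2; linarith
  have hu : t ≤ b + 1 := by cases' abs_lt.mp hball with h1 h2; linarith
  calc |∫ y, ω 1 y * Real.exp (t * ω 1 y) ∂Q|
      ≤ ∫ y, |ω 1 y * Real.exp (t * ω 1 y)| ∂Q := by
        have hni := norm_integral_le_integral_norm (μ := Q)
          (fun y => ω 1 y * Real.exp (t * ω 1 y))
        simpa [Real.norm_eq_abs, abs_mul, abs_of_pos (Real.exp_pos _)] using hni
    _ ≤ ∫ y, 2 * (Real.exp ((b + 2) * ω 1 y) + Real.exp ((b - 2) * ω 1 y)) ∂Q := by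
        refine integral_mono ?_ (((hint (b + 2)).add (hint (b - 2))).const_mul 2) fun y => ?_
        · refine Integrable.mono' ((((hint (b+2)).add (hint (b-2))).const_mul 2))
            (((hm 1).mul ((hm 1).const_mul t).exp).abs).aestronglyMeasurable ?_
          refine Filter.Eventually.of_forall fun y => ?_
          rw [Real.norm_eq_abs, abs_abs]
          have h5 := abs_mul_exp_le (b := t) (l := b - 1) (u := b + 1) (ω 1 y) hl hu
          have e2 : b - 1 - 1 = b - 2 := by ring
          have e3 : b + 1 + 1 = b + 2 := by ring
          rw [e2, e3] at h5
          exact h5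
        · have h5 := abs_mul_exp_le (b := t) (l := b - 1) (u := b + 1) (ω 1 y) hl hu
          have e2 : b - 1 - 1 = b - 2 := by ring
          have e3 : b + 1 + 1 = b + 2 := by ring
          rw [e2, e3] at h5
          exact h5

end Mgf


lemma phi_mem_Icc {w A B : ℝ} (hw : 0 < w) (hA : 0 ≤ A) (hB : 0 ≤ B) :
    0 ≤ w * A / (w * A + B) ∧ w * A / (w * A + B) ≤ 1 := by
  rcases eq_or_lt_of_le hA with hA0 | hA0
  · simp [← hA0]
  · have hden : 0 < w * A + B := by positivity
    constructor
    · positivity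
    · rw [div_le_one hden]; linarith

lemma oneDim_key (μ : Measure ℝ) [IsProbabilityMeasure μ] {β : ℝ} (hβ : 0 ≤ β)
    (hw : Integrable (fun t => Real.exp (β * t)) μ)
    (hid : Integrable (fun t => t) μ)
    (htw : Integrable (fun t => t * Real.exp (β * t)) μ)
    {A B : ℝ} (hA : 0 ≤ A) (hB : 0 ≤ B) :
    ∫ t, (t - (∫ s, s * Real.exp (β * s) ∂μ) / (∫ s, Real.exp (β * s) ∂μ)) *
        (Real.exp (β * t) * A / (Real.exp (β * t) * A + B)) ∂μ ≤ 0 := by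
  set w : ℝ → ℝ := fun t => Real.exp (β * t) with hw_def
  set φ : ℝ → ℝ := fun t => w t * A / (w t * A + B) with hφ_def
  set c : ℝ := (∫ s, s * w s ∂μ) / (∫ s, w s ∂μ) with hc_def
  rcases eq_or_lt_of_le hA with hA0 | hA0
  · have : ∀ t, (t - c) * φ t = 0 := by
      intro t; simp [hφ_def, ← hA0]
    rw [integral_congr_ae (Filter.Eventually.of_forall this)]
    simp
  -- now 0 < A
  have hwpos : ∀ t, 0 < w t := fun t => Real.exp_pos _
  have hden : ∀ t, 0 < w t * A + B := fun t => by positivity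
  have hφ01 : ∀ t, 0 ≤ φ t ∧ φ t ≤ 1 := fun t => phi_mem_Icc (hwpos t) hA hB
  have hm0 : 0 < ∫ s, w s ∂μ :=
    ProbabilityTheory.mgf_pos (X := fun t : ℝ => t) (μ := μ) hw
  -- measurability
  have hwm : Measurable w := (measurable_id.const_mul β).exp
  have hφm : Measurable φ := ((hwm.mul_const A).div ((hwm.mul_const A).add_const B))
  -- basic integrabilities
  have hsubc : Integrable (fun t => (t - c) * w t) μ := by
    refine (htw.sub (hw.const_mul c)).congr (Filter.Eventually.of_forall fun t => ?_)
    simp only [Pi.sub_apply, hw_def]; ring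
  have hφint : Integrable φ μ := by
    refine Integrable.mono' (integrable_const 1) hφm.aestronglyMeasurable ?_
    exact Filter.Eventually.of_forall fun t => by
      rw [Real.norm_eq_abs, abs_of_nonneg (hφ01 t).1]; exact (hφ01 t).2
  have htφint : Integrable (fun t => (t - c) * φ t) μ := by
    refine Integrable.mono' ((hid.sub (integrable_const c)).abs)
      (((measurable_id.sub_const c).mul hφm).aestronglyMeasurable) ?_
    refine Filter.Eventually.of_forall fun t => ?_
    rw [Real.norm_eq_abs, abs_mul]
    calc |t - c| * |φ t| ≤ |t - c| * 1 := by
          refine mul_le_mul_of_nonneg_left ?_ (abs_nonneg _)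
          rw [abs_of_nonneg (hφ01 t).1]; exact (hφ01 t).2
      _ = |(fun s => s - c) t| := by simp
  -- zero-mean identity
  have hzero : ∫ s, (s - c) * w s ∂μ = 0 := by
    have : ∫ s, (s - c) * w s ∂μ = (∫ s, s * w s ∂μ) - c * ∫ s, w s ∂μ := by
      simp only [sub_mul]
      rw [integral_sub htw (hw.const_mul c), integral_const_mul]
    rw [this, hc_def, div_mul_cancel₀ _ (ne_of_gt hm0), sub_self]
  -- product measure computations
  have ha1 : Integrable (fun z : ℝ × ℝ => w z.1 * ((z.2 - c) * φ z.2)) (μ.prod μ) :=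
    hw.mul_prod htφint
  have ha2 : Integrable (fun z : ℝ × ℝ => ((z.1 - c) * w z.1) * φ z.2) (μ.prod μ) :=
    hsubc.mul_prod hφint
  have hI1 : ∫ z : ℝ × ℝ, w z.1 * ((z.2 - c) * φ z.2) ∂(μ.prod μ)
      = (∫ s, w s ∂μ) * ∫ t, (t - c) * φ t ∂μ :=
    integral_prod_mul w (fun t => (t - c) * φ t)
  have hI2 : ∫ z : ℝ × ℝ, ((z.1 - c) * w z.1) * φ z.2 ∂(μ.prod μ) = 0 := by
    rw [integral_prod_mul (fun s => (s - c) * w s) φ, hzero, zero_mul]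
  set G : ℝ × ℝ → ℝ := fun z => w z.1 * φ z.2 * (z.2 - z.1) with hG_def
  have hGeq : ∀ z : ℝ × ℝ,
      w z.1 * ((z.2 - c) * φ z.2) - ((z.1 - c) * w z.1) * φ z.2 = G z := by
    intro z; simp only [hG_def]; ring
  have hGint : Integrable G (μ.prod μ) := by
    have hb1 : Integrable (fun z : ℝ × ℝ => w z.1 * |z.2|) (μ.prod μ) := hw.mul_prod hid.abs
    have hwabs : Integrable (fun t => w t * |t|) μ := by
      have := htw.abs
      refine this.congr (Filter.Eventually.of_forall fun t => ?_)
      show |t * Real.exp (β * t)| = Real.exp (β * t) * |t|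
      rw [abs_mul, abs_of_pos (Real.exp_pos _), mul_comm]
    have hb2 : Integrable (fun z : ℝ × ℝ => (w z.1 * |z.1|) * (1 : ℝ)) (μ.prod μ) :=
      hwabs.mul_prod (integrable_const 1)
    refine Integrable.mono' (hb1.add hb2) ?_ ?_
    · exact (((hwm.comp measurable_fst).mul (hφm.comp measurable_snd)).mul
        (measurable_snd.sub measurable_fst)).aestronglyMeasurable
    · refine Filter.Eventually.of_forall fun z => ?_
      rw [Real.norm_eq_abs, hG_def]
      have habs : |z.2 - z.1| ≤ |z.2| + |z.1| := abs_sub _ _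
      have h1 : |w z.1 * φ z.2 * (z.2 - z.1)| ≤ w z.1 * 1 * (|z.2| + |z.1|) := by
        rw [abs_mul, abs_mul, abs_of_pos (hwpos z.1), abs_of_nonneg (hφ01 z.2).1]
        gcongr
        all_goals first | exact (hφ01 z.2).2 | exact habs
      calc |w z.1 * φ z.2 * (z.2 - z.1)| ≤ w z.1 * 1 * (|z.2| + |z.1|) := h1
        _ = w z.1 * |z.2| + w z.1 * |z.1| * 1 := by ring
  have hG : ∫ z, G z ∂(μ.prod μ) = (∫ s, w s ∂μ) * ∫ t, (t - c) * φ t ∂μ := by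
    have := integral_sub ha1 ha2
    rw [hI1, hI2, sub_zero] at this
    rw [← this]
    exact integral_congr_ae (Filter.Eventually.of_forall fun z => (hGeq z).symm)
  -- swap
  have hGswap : ∫ z : ℝ × ℝ, G (Prod.swap z) ∂(μ.prod μ) = ∫ z, G z ∂(μ.prod μ) := by
    have := integral_prod_swap (μ := μ) (ν := μ) G
    simpa [Function.comp] using this
  have hGsint : Integrable (fun z : ℝ × ℝ => G (Prod.swap z)) (μ.prod μ) := hGint.swap
  have hsum : ∫ z : ℝ × ℝ, (G z + G (Prod.swap z)) ∂(μ.prod μ)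
      = 2 * ((∫ s, w s ∂μ) * ∫ t, (t - c) * φ t ∂μ) := by
    rw [integral_add hGint hGsint, hG, hGswap, hG]; ring
  -- pointwise nonpositivity
  have hmono : ∀ s t : ℝ, s ≤ t → w s * φ t ≤ w t * φ s := by
    intro s t hst
    have hwst : w s ≤ w t := Real.exp_le_exp.mpr (mul_le_mul_of_nonneg_left hst hβ)
    have hdenle : w s * A + B ≤ w t * A + B := by nlinarith
    have h1 : w s * φ t = w s * w t * A / (w t * A + B) := by
      rw [hφ_def]; ring_nf
    have h2 : w t * φ s = w s * w t * A / (w s * A + B) := by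
      rw [hφ_def]; ring_nf
    rw [h1, h2]
    gcongr
    all_goals first | exact hden s | exact hdenle | positivity
  have hpt : ∀ z : ℝ × ℝ, G z + G (Prod.swap z) ≤ 0 := by
    intro z
    have : G z + G (Prod.swap z) = (z.2 - z.1) * (w z.1 * φ z.2 - w z.2 * φ z.1) := by
      simp only [hG_def, Prod.swap]; ring
    rw [this]
    rcases le_total z.1 z.2 with hle | hle
    · exact mul_nonpos_of_nonneg_of_nonpos (by linarith) (by linarith [hmono z.1 z.2 hle])
    · exact mul_nonpos_of_nonpos_of_nonneg (by linarith) (by linarith [hmono z.2 z.1 hle])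
  have hfin : 2 * ((∫ s, w s ∂μ) * ∫ t, (t - c) * φ t ∂μ) ≤ 0 := by
    rw [← hsum]
    exact integral_nonpos hpt
  have hfinal : (∫ t, (t - c) * φ t ∂μ) ≤ 0 := by nlinarith [hm0]
  exact hfinal

section Main

variable [MeasurableSpace Ω₁] [MeasurableSpace Ω₂]
variable (P : Measure Ω₁) (Q : Measure Ω₂) (τ : ℕ → Ω₁ → ℕ) (ω : ℕ → Ω₂ → ℝ)

def cQ (b : ℝ) : ℝ := (∫ y, ω 1 y * Real.exp (b * ω 1 y) ∂Q) / pinMgf Q ω b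

def zSum (N : ℕ) (h b : ℝ) (y : Ω₂) : ℝ :=
  ∑ J ∈ (Finset.Icc 1 N).powerset,
    Real.exp (∑ n ∈ J, (b * ω n y + h - Real.log (pinMgf Q ω b))) * patP P τ N J

def zDer (N : ℕ) (h b : ℝ) (y : Ω₂) : ℝ :=
  ∑ J ∈ (Finset.Icc 1 N).powerset,
    Real.exp (∑ n ∈ J, (b * ω n y + h - Real.log (pinMgf Q ω b)))
      * (∑ n ∈ J, (ω n y - cQ Q ω b)) * patP P τ N J

variable [IsProbabilityMeasure P] [IsProbabilityMeasure Q]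

lemma pinZ_eq_zSum (hτ : ∀ j, Measurable (τ j)) (N : ℕ) (b h : ℝ) (y : Ω₂) :
    pinZ P Q τ ω N b h y = zSum P Q τ ω N h b y :=
  integral_pattern P τ hτ N (fun n => b * ω n y + h - Real.log (pinMgf Q ω b))

lemma exists_pos_patP (hτ : ∀ j, Measurable (τ j)) (N : ℕ)
    (hpos : 0 < (P {x | ∃ j, τ j x = N}).toReal) :
    ∃ J ∈ (Finset.Icc 1 N).powerset, 0 < patP P τ N J := by
  by_contra hcon
  push_neg at hcon
  have hle : ∑ J ∈ (Finset.Icc 1 N).powerset, patP P τ N J ≤ 0 :=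
    Finset.sum_nonpos fun J hJ => hcon J hJ
  rw [sum_patP P τ hτ N] at hle
  linarith

lemma zSum_pos (hτ : ∀ j, Measurable (τ j)) (N : ℕ) (h b : ℝ) (y : Ω₂)
    (hpos : 0 < (P {x | ∃ j, τ j x = N}).toReal) :
    0 < zSum P Q τ ω N h b y := by
  obtain ⟨J₀, hJ₀mem, hJ₀⟩ := exists_pos_patP P τ hτ N hpos
  have hterm : 0 < Real.exp (∑ n ∈ J₀, (b * ω n y + h - Real.log (pinMgf Q ω b)))
      * patP P τ N J₀ := mul_pos (Real.exp_pos _) hJ₀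
  rw [zSum]
  refine lt_of_lt_of_le hterm (Finset.single_le_sum
    (f := fun J => Real.exp (∑ n ∈ J, (b * ω n y + h - Real.log (pinMgf Q ω b)))
      * patP P τ N J) (fun J _ => ?_) hJ₀mem)
  exact mul_nonneg (Real.exp_pos _).le (patP_nonneg P τ N J)

lemma hasDerivAt_log_pinMgf (hm : ∀ n, Measurable (ω n))
    (hint : ∀ t : ℝ, Integrable (fun y => Real.exp (t * ω 1 y)) Q) (b : ℝ) :
    HasDerivAt (fun t => Real.log (pinMgf Q ω t)) (cQ Q ω b) b :=
  (hasDerivAt_pinMgf Q ω hm hint b).log (pinMgf_pos Q ω hint b).ne'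

lemma hasDerivAt_zSum (hm : ∀ n, Measurable (ω n))
    (hint : ∀ t : ℝ, Integrable (fun y => Real.exp (t * ω 1 y)) Q)
    (N : ℕ) (h : ℝ) (y : Ω₂) (b : ℝ) :
    HasDerivAt (fun t => zSum P Q τ ω N h t y) (zDer P Q τ ω N h b y) b := by
  unfold zSum zDer
  refine HasDerivAt.fun_sum fun J hJ => ?_
  have hinner : HasDerivAt (fun t => ∑ n ∈ J, (t * ω n y + h - Real.log (pinMgf Q ω t)))
      (∑ n ∈ J, (ω n y - cQ Q ω b)) b := by
    refine HasDerivAt.fun_sum fun n _ => ?_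
    exact ((hasDerivAt_mul_const (ω n y)).add_const h).sub
      (hasDerivAt_log_pinMgf Q ω hm hint b)
  exact hinner.exp.mul_const (patP P τ N J)

lemma hasDerivAt_log_zSum (hτ : ∀ j, Measurable (τ j)) (hm : ∀ n, Measurable (ω n))
    (hint : ∀ t : ℝ, Integrable (fun y => Real.exp (t * ω 1 y)) Q)
    (N : ℕ) (h : ℝ) (y : Ω₂) (b : ℝ)
    (hpos : 0 < (P {x | ∃ j, τ j x = N}).toReal) :
    HasDerivAt (fun t => Real.log (zSum P Q τ ω N h t y))
      (zDer P Q τ ω N h b y / zSum P Q τ ω N h b y) b :=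
  (hasDerivAt_zSum P Q τ ω hm hint N h y b).log
    (zSum_pos P Q τ ω hτ N h b y hpos).ne'

lemma measurable_zSum (hm : ∀ n, Measurable (ω n)) (N : ℕ) (h b : ℝ) :
    Measurable (fun y => zSum P Q τ ω N h b y) := by
  refine Finset.measurable_sum _ fun J hJ => ?_
  refine Measurable.mul_const ?_ _
  refine Measurable.exp ?_
  exact Finset.measurable_sum _ fun n _ => (((hm n).const_mul b).add_const h).sub_const _

lemma measurable_zDer (hm : ∀ n, Measurable (ω n)) (N : ℕ) (h b : ℝ) :
    Measurable (fun y => zDer P Q τ ω N h b y) := by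
  refine Finset.measurable_sum _ fun J hJ => ?_
  refine Measurable.mul_const ?_ _
  refine Measurable.mul ?_ ?_
  · exact Measurable.exp <|
      Finset.measurable_sum _ fun n _ => (((hm n).const_mul b).add_const h).sub_const _
  · exact Finset.measurable_sum _ fun n _ => (hm n).sub_const _

lemma abs_log_zSum_le (hτ : ∀ j, Measurable (τ j)) (N : ℕ) (h b : ℝ) (y : Ω₂)
    (J₀ : Finset ℕ) (hJ₀mem : J₀ ∈ (Finset.Icc 1 N).powerset) (hJ₀ : 0 < patP P τ N J₀) :
    |Real.log (zSum P Q τ ω N h b y)|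
      ≤ (∑ n ∈ Finset.Icc 1 N, |b * ω n y + h - Real.log (pinMgf Q ω b)|)
        + (|Real.log ((P {x | ∃ j, τ j x = N}).toReal)| + |Real.log (patP P τ N J₀)|) := by
  set R := ∑ n ∈ Finset.Icc 1 N, |b * ω n y + h - Real.log (pinMgf Q ω b)| with hR
  set S := (P {x | ∃ j, τ j x = N}).toReal with hS
  have hRnn : 0 ≤ R := Finset.sum_nonneg fun _ _ => abs_nonneg _
  have habs_sum : ∀ J ∈ (Finset.Icc 1 N).powerset,
      |∑ n ∈ J, (b * ω n y + h - Real.log (pinMgf Q ω b))| ≤ R := by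
    intro J hJ
    calc |∑ n ∈ J, (b * ω n y + h - Real.log (pinMgf Q ω b))|
        ≤ ∑ n ∈ J, |b * ω n y + h - Real.log (pinMgf Q ω b)| :=
          Finset.abs_sum_le_sum_abs _ _
      _ ≤ R := Finset.sum_le_sum_of_subset_of_nonneg (Finset.mem_powerset.mp hJ)
          (fun n _ _ => abs_nonneg _)
  have hSsum : ∑ J ∈ (Finset.Icc 1 N).powerset, patP P τ N J = S := sum_patP P τ hτ N
  have hSpos : 0 < S := by
    rw [← hSsum]
    exact lt_of_lt_of_le hJ₀ (Finset.single_le_sum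
      (fun J _ => patP_nonneg P τ N J) hJ₀mem)
  have hup : zSum P Q τ ω N h b y ≤ Real.exp R * S := by
    rw [zSum, ← hSsum, Finset.mul_sum]
    refine Finset.sum_le_sum fun J hJ => ?_
    refine mul_le_mul_of_nonneg_right ?_ (patP_nonneg P τ N J)
    exact Real.exp_le_exp.mpr ((le_abs_self _).trans (habs_sum J hJ))
  have hlow : Real.exp (-R) * patP P τ N J₀ ≤ zSum P Q τ ω N h b y := by
    have h1 : Real.exp (-R) * patP P τ N J₀
        ≤ Real.exp (∑ n ∈ J₀, (b * ω n y + h - Real.log (pinMgf Q ω b)))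
          * patP P τ N J₀ := by
      refine mul_le_mul_of_nonneg_right ?_ (patP_nonneg P τ N J₀)
      refine Real.exp_le_exp.mpr ?_
      have := habs_sum J₀ hJ₀mem
      have := neg_abs_le (∑ n ∈ J₀, (b * ω n y + h - Real.log (pinMgf Q ω b)))
      linarith
    rw [zSum]
    refine h1.trans (Finset.single_le_sum
      (f := fun J => Real.exp (∑ n ∈ J, (b * ω n y + h - Real.log (pinMgf Q ω b)))
        * patP P τ N J) (fun J _ => ?_) hJ₀mem)
    exact mul_nonneg (Real.exp_pos _).le (patP_nonneg P τ N J)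
  have hzpos : 0 < zSum P Q τ ω N h b y :=
    lt_of_lt_of_le (mul_pos (Real.exp_pos _) hJ₀) hlow
  rw [abs_le]
  constructor
  · have h2 : Real.log (Real.exp (-R) * patP P τ N J₀) ≤ Real.log (zSum P Q τ ω N h b y) :=
      Real.log_le_log (mul_pos (Real.exp_pos _) hJ₀) hlow
    rw [Real.log_mul (Real.exp_ne_zero _) hJ₀.ne', Real.log_exp] at h2
    have h3 := neg_abs_le (Real.log (patP P τ N J₀))
    have h4 : 0 ≤ |Real.log S| := abs_nonneg _
    linarith
  · have h2 : Real.log (zSum P Q τ ω N h b y) ≤ Real.log (Real.exp R * S) :=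
      Real.log_le_log hzpos hup
    rw [Real.log_mul (Real.exp_ne_zero _) hSpos.ne', Real.log_exp] at h2
    have h3 := le_abs_self (Real.log S)
    have h4 : 0 ≤ |Real.log (patP P τ N J₀)| := abs_nonneg _
    linarith

lemma integrable_log_zSum (hτ : ∀ j, Measurable (τ j)) (hm : ∀ n, Measurable (ω n))
    (hid : ∀ n, IdentDistrib (ω n) (ω 1) Q Q)
    (hint : ∀ t : ℝ, Integrable (fun y => Real.exp (t * ω 1 y)) Q)
    (N : ℕ) (h b : ℝ)
    (hpos : 0 < (P {x | ∃ j, τ j x = N}).toReal) :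
    Integrable (fun y => Real.log (zSum P Q τ ω N h b y)) Q := by
  obtain ⟨J₀, hJ₀mem, hJ₀⟩ := exists_pos_patP P τ hτ N hpos
  refine Integrable.mono'
    (g := fun y => (∑ n ∈ Finset.Icc 1 N, |b * ω n y + h - Real.log (pinMgf Q ω b)|)
        + (|Real.log ((P {x | ∃ j, τ j x = N}).toReal)| + |Real.log (patP P τ N J₀)|))
    ?_ (Real.measurable_log.comp (measurable_zSum P Q τ ω hm N h b)).aestronglyMeasurable
    (Filter.Eventually.of_forall fun y => ?_)
  · refine Integrable.add ?_ (integrable_const _)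
    refine integrable_finset_sum _ fun n _ => ?_
    exact ((((integrable_omega Q ω hm hid hint n).const_mul b).add
      (integrable_const h)).sub (integrable_const _)).abs
  · rw [Real.norm_eq_abs]
    exact abs_log_zSum_le P Q τ ω hτ N h b y J₀ hJ₀mem hJ₀

lemma cQ_abs_le (hm : ∀ n, Measurable (ω n))
    (hid : ∀ n, IdentDistrib (ω n) (ω 1) Q Q)
    (hint : ∀ t : ℝ, Integrable (fun y => Real.exp (t * ω 1 y)) Q)
    (hcent : (∫ y, ω 1 y ∂Q) = 0) (β : ℝ) :
    ∀ b ∈ Metric.ball β 1, |cQ Q ω b|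
      ≤ ∫ y, 2 * (Real.exp ((β + 2) * ω 1 y) + Real.exp ((β - 2) * ω 1 y)) ∂Q := by
  intro b hb
  have h1 : 1 ≤ pinMgf Q ω b := one_le_pinMgf Q ω hm hid hint hcent b
  have h2 : |cQ Q ω b| ≤ |∫ y, ω 1 y * Real.exp (b * ω 1 y) ∂Q| := by
    rw [cQ, abs_div, abs_of_pos (lt_of_lt_of_le one_pos h1)]
    exact div_le_self (abs_nonneg _) h1
  exact h2.trans (norm_deriv_pinMgf_le Q ω hm hint β b hb)

lemma abs_zDer_div_zSum_le (hτ : ∀ j, Measurable (τ j)) (hm : ∀ n, Measurable (ω n))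
    (hid : ∀ n, IdentDistrib (ω n) (ω 1) Q Q)
    (hint : ∀ t : ℝ, Integrable (fun y => Real.exp (t * ω 1 y)) Q)
    (hcent : (∫ y, ω 1 y ∂Q) = 0) (N : ℕ) (h : ℝ)
    (hpos : 0 < (P {x | ∃ j, τ j x = N}).toReal) (β : ℝ) :
    ∀ b ∈ Metric.ball β 1, ∀ y : Ω₂,
      |zDer P Q τ ω N h b y / zSum P Q τ ω N h b y|
        ≤ (∑ n ∈ Finset.Icc 1 N, |ω n y|)
          + N * (∫ y, 2 * (Real.exp ((β + 2) * ω 1 y) + Real.exp ((β - 2) * ω 1 y)) ∂Q) := by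
  intro b hb y
  set Cc := ∫ y, 2 * (Real.exp ((β + 2) * ω 1 y) + Real.exp ((β - 2) * ω 1 y)) ∂Q with hCc
  have hCcnn : 0 ≤ Cc := by
    refine integral_nonneg fun y => ?_
    have := (Real.exp_pos ((β + 2) * ω 1 y)).le
    have := (Real.exp_pos ((β - 2) * ω 1 y)).le
    positivity
  have hc := cQ_abs_le Q ω hm hid hint hcent β b hb
  set bnd := (∑ n ∈ Finset.Icc 1 N, |ω n y|) + N * Cc with hbnd
  have hbndnn : 0 ≤ bnd := by
    have : 0 ≤ ∑ n ∈ Finset.Icc 1 N, |ω n y| :=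
      Finset.sum_nonneg fun _ _ => abs_nonneg _
    positivity
  have hJbound : ∀ J ∈ (Finset.Icc 1 N).powerset,
      |∑ n ∈ J, (ω n y - cQ Q ω b)| ≤ bnd := by
    intro J hJ
    have hJsub := Finset.mem_powerset.mp hJ
    have hcard : (J.card : ℝ) ≤ (N : ℝ) := by
      have := Finset.card_le_card hJsub
      rw [Nat.card_Icc] at this
      exact_mod_cast this.trans (by omega)
    calc |∑ n ∈ J, (ω n y - cQ Q ω b)|
        ≤ ∑ n ∈ J, |ω n y - cQ Q ω b| := Finset.abs_sum_le_sum_abs _ _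
      _ ≤ ∑ n ∈ J, (|ω n y| + |cQ Q ω b|) :=
          Finset.sum_le_sum fun n _ => abs_sub _ _
      _ = (∑ n ∈ J, |ω n y|) + J.card * |cQ Q ω b| := by
          rw [Finset.sum_add_distrib, Finset.sum_const, nsmul_eq_mul]
      _ ≤ (∑ n ∈ Finset.Icc 1 N, |ω n y|) + N * Cc := by
          refine add_le_add (Finset.sum_le_sum_of_subset_of_nonneg hJsub
            (fun n _ _ => abs_nonneg _)) ?_
          refine mul_le_mul hcard hc (abs_nonneg _) (Nat.cast_nonneg N)
  have hzpos := zSum_pos P Q τ ω hτ N h b y hpos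
  have hnum : |zDer P Q τ ω N h b y| ≤ bnd * zSum P Q τ ω N h b y := by
    rw [zSum, Finset.mul_sum]
    calc |zDer P Q τ ω N h b y|
        ≤ ∑ J ∈ (Finset.Icc 1 N).powerset,
            |Real.exp (∑ n ∈ J, (b * ω n y + h - Real.log (pinMgf Q ω b)))
              * (∑ n ∈ J, (ω n y - cQ Q ω b)) * patP P τ N J| := by
          rw [zDer]; exact Finset.abs_sum_le_sum_abs _ _
      _ ≤ ∑ J ∈ (Finset.Icc 1 N).powerset,
            bnd * (Real.exp (∑ n ∈ J, (b * ω n y + h - Real.log (pinMgf Q ω b)))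
              * patP P τ N J) := by
          refine Finset.sum_le_sum fun J hJ => ?_
          rw [abs_mul, abs_mul, abs_of_pos (Real.exp_pos _),
            abs_of_nonneg (patP_nonneg P τ N J)]
          have h1 := hJbound J hJ
          have h2 := (Real.exp_pos
            (∑ n ∈ J, (b * ω n y + h - Real.log (pinMgf Q ω b)))).le
          have h3 := patP_nonneg P τ N J
          calc Real.exp (∑ n ∈ J, (b * ω n y + h - Real.log (pinMgf Q ω b)))
                * |∑ n ∈ J, (ω n y - cQ Q ω b)| * patP P τ N J
              ≤ Real.exp (∑ n ∈ J, (b * ω n y + h - Real.log (pinMgf Q ω b)))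
                * bnd * patP P τ N J :=
                mul_le_mul_of_nonneg_right (mul_le_mul_of_nonneg_left h1 h2) h3
            _ = bnd * (Real.exp (∑ n ∈ J, (b * ω n y + h - Real.log (pinMgf Q ω b)))
                * patP P τ N J) := by ring
  rw [abs_div, abs_of_pos hzpos, div_le_iff₀ hzpos]
  exact hnum
  
lemma hasDerivAt_integral_log_zSum (hτ : ∀ j, Measurable (τ j)) (hm : ∀ n, Measurable (ω n))
    (hid : ∀ n, IdentDistrib (ω n) (ω 1) Q Q)
    (hint : ∀ t : ℝ, Integrable (fun y => Real.exp (t * ω 1 y)) Q)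
    (hcent : (∫ y, ω 1 y ∂Q) = 0) (N : ℕ) (h : ℝ)
    (hpos : 0 < (P {x | ∃ j, τ j x = N}).toReal) (β : ℝ) :
    Integrable (fun y => zDer P Q τ ω N h β y / zSum P Q τ ω N h β y) Q ∧
    HasDerivAt (fun b => ∫ y, Real.log (zSum P Q τ ω N h b y) ∂Q)
      (∫ y, zDer P Q τ ω N h β y / zSum P Q τ ω N h β y ∂Q) β := by
  have key := hasDerivAt_integral_of_dominated_loc_of_deriv_le (μ := Q)
    (F := fun b y => Real.log (zSum P Q τ ω N h b y))
    (F' := fun b y => zDer P Q τ ω N h b y / zSum P Q τ ω N h b y)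
    (bound := fun y => (∑ n ∈ Finset.Icc 1 N, |ω n y|)
      + N * (∫ y, 2 * (Real.exp ((β + 2) * ω 1 y) + Real.exp ((β - 2) * ω 1 y)) ∂Q))
    (x₀ := β) (Metric.ball_mem_nhds β one_pos)
    (Filter.Eventually.of_forall fun b =>
      (Real.measurable_log.comp (measurable_zSum P Q τ ω hm N h b)).aestronglyMeasurable)
    (integrable_log_zSum P Q τ ω hτ hm hid hint N h β hpos)
    (((measurable_zDer P Q τ ω hm N h β).div
      (measurable_zSum P Q τ ω hm N h β)).aestronglyMeasurable)
    (Filter.Eventually.of_forall fun y b hb => ?_)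
    ?_ (Filter.Eventually.of_forall fun y b hb => ?_)
  · exact key
  · rw [Real.norm_eq_abs]
    exact abs_zDer_div_zSum_le P Q τ ω hτ hm hid hint hcent N h hpos β b hb y
  · refine Integrable.add ?_ (integrable_const _)
    refine integrable_finset_sum _ fun n _ => ?_
    exact (integrable_omega Q ω hm hid hint n).abs
  · exact hasDerivAt_log_zSum P Q τ ω hτ hm hint N h y b hpos

def numN (N : ℕ) (h b : ℝ) (n : ℕ) (y : Ω₂) : ℝ :=
  ∑ J ∈ (Finset.Icc 1 N).powerset,
    if n ∈ J then
      Real.exp (∑ m ∈ J, (b * ω m y + h - Real.log (pinMgf Q ω b))) * patP P τ N J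
    else 0

def phiA (N : ℕ) (h b : ℝ) (n : ℕ) (v : {m // m ∈ (Finset.Icc 1 N).erase n} → ℝ) : ℝ :=
  ∑ J ∈ (Finset.Icc 1 N).powerset,
    if n ∈ J then
      Real.exp (h - Real.log (pinMgf Q ω b))
        * Real.exp (∑ i ∈ ((Finset.Icc 1 N).erase n).attach,
            (if (i : ℕ) ∈ J then b * v i + h - Real.log (pinMgf Q ω b) else 0))
        * patP P τ N J
    else 0

def phiB (N : ℕ) (h b : ℝ) (n : ℕ) (v : {m // m ∈ (Finset.Icc 1 N).erase n} → ℝ) : ℝ :=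
  ∑ J ∈ (Finset.Icc 1 N).powerset,
    if n ∈ J then 0 else
      Real.exp (∑ i ∈ ((Finset.Icc 1 N).erase n).attach,
          (if (i : ℕ) ∈ J then b * v i + h - Real.log (pinMgf Q ω b) else 0))
        * patP P τ N J

lemma attach_sum_eq (N n : ℕ) (J : Finset ℕ) (hJsub : J ⊆ Finset.Icc 1 N) (f : ℕ → ℝ) :
    ∑ i ∈ ((Finset.Icc 1 N).erase n).attach, (if (i : ℕ) ∈ J then f i else 0)
      = ∑ m ∈ J.erase n, f m := by
  rw [Finset.sum_attach ((Finset.Icc 1 N).erase n) (fun m => if m ∈ J then f m else 0),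
    Finset.sum_ite_mem]
  congr 1
  ext m
  simp only [Finset.mem_inter, Finset.mem_erase]
  constructor
  · rintro ⟨⟨hmn, _⟩, hmJ⟩; exact ⟨hmn, hmJ⟩
  · rintro ⟨hmn, hmJ⟩; exact ⟨⟨hmn, hJsub hmJ⟩, hmJ⟩

lemma numN_eq (N : ℕ) (h b : ℝ) (n : ℕ) (y : Ω₂) :
    numN P Q τ ω N h b n y
      = Real.exp (b * ω n y) * phiA P Q τ ω N h b n (fun i => ω i y) := by
  rw [numN, phiA, Finset.mul_sum]
  refine Finset.sum_congr rfl fun J hJ => ?_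
  by_cases hnJ : n ∈ J
  · rw [if_pos hnJ, if_pos hnJ]
    have hJsub := Finset.mem_powerset.mp hJ
    have hkey : ∑ i ∈ ((Finset.Icc 1 N).erase n).attach,
        (if (i : ℕ) ∈ J then b * ω i y + h - Real.log (pinMgf Q ω b) else 0)
        = ∑ m ∈ J.erase n, (b * ω m y + h - Real.log (pinMgf Q ω b)) :=
      attach_sum_eq N n J hJsub (fun m => b * ω m y + h - Real.log (pinMgf Q ω b))
    have hsum : ∑ m ∈ J, (b * ω m y + h - Real.log (pinMgf Q ω b))
        = b * ω n y + ((h - Real.log (pinMgf Q ω b))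
          + ∑ m ∈ J.erase n, (b * ω m y + h - Real.log (pinMgf Q ω b))) := by
      rw [← Finset.add_sum_erase _ _ hnJ]; ring
    rw [hkey, hsum, Real.exp_add, Real.exp_add]
    ring
  · rw [if_neg hnJ, if_neg hnJ, mul_zero]

lemma zSum_eq_AB (N : ℕ) (h b : ℝ) (n : ℕ) (y : Ω₂) :
    zSum P Q τ ω N h b y
      = Real.exp (b * ω n y) * phiA P Q τ ω N h b n (fun i => ω i y)
        + phiB P Q τ ω N h b n (fun i => ω i y) := by
  rw [← numN_eq, zSum, numN, phiB, ← Finset.sum_add_distrib]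
  refine Finset.sum_congr rfl fun J hJ => ?_
  by_cases hnJ : n ∈ J
  · rw [if_pos hnJ, if_pos hnJ, add_zero]
  · rw [if_neg hnJ, if_neg hnJ, zero_add]
    have hJsub := Finset.mem_powerset.mp hJ
    rw [attach_sum_eq N n J hJsub (fun m => b * ω m y + h - Real.log (pinMgf Q ω b)),
      Finset.erase_eq_of_notMem hnJ]

lemma phiA_nonneg (N : ℕ) (h b : ℝ) (n : ℕ) (v : {m // m ∈ (Finset.Icc 1 N).erase n} → ℝ) :
    0 ≤ phiA P Q τ ω N h b n v := by
  refine Finset.sum_nonneg fun J _ => ?_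
  by_cases hnJ : n ∈ J
  · simp only [if_pos hnJ]
    have := patP_nonneg P τ N J
    positivity
  · simp only [if_neg hnJ]; exact le_refl 0

lemma phiB_nonneg (N : ℕ) (h b : ℝ) (n : ℕ) (v : {m // m ∈ (Finset.Icc 1 N).erase n} → ℝ) :
    0 ≤ phiB P Q τ ω N h b n v := by
  refine Finset.sum_nonneg fun J _ => ?_
  by_cases hnJ : n ∈ J
  · simp only [if_pos hnJ]; exact le_refl 0
  · simp only [if_neg hnJ]
    have := patP_nonneg P τ N J
    positivity

lemma measurable_phiA (N : ℕ) (h b : ℝ) (n : ℕ) :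
    Measurable (phiA P Q τ ω N h b n) := by
  refine Finset.measurable_sum _ fun J _ => ?_
  by_cases hnJ : n ∈ J
  · simp only [if_pos hnJ]
    refine Measurable.mul_const (Measurable.mul measurable_const (Measurable.exp ?_)) _
    refine Finset.measurable_sum _ fun i _ => ?_
    by_cases hiJ : (i : ℕ) ∈ J
    · simp only [if_pos hiJ]
      have hvi : Measurable (fun v : {m // m ∈ (Finset.Icc 1 N).erase n} → ℝ => v i) :=
        measurable_pi_apply i
      exact ((hvi.const_mul b).add_const h).sub_const _
    · simp only [if_neg hiJ]; exact measurable_const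
  · simp only [if_neg hnJ]; exact measurable_const

lemma measurable_phiB (N : ℕ) (h b : ℝ) (n : ℕ) :
    Measurable (phiB P Q τ ω N h b n) := by
  refine Finset.measurable_sum _ fun J _ => ?_
  by_cases hnJ : n ∈ J
  · simp only [if_pos hnJ]; exact measurable_const
  · simp only [if_neg hnJ]
    refine Measurable.mul_const (Measurable.exp ?_) _
    refine Finset.measurable_sum _ fun i _ => ?_
    by_cases hiJ : (i : ℕ) ∈ J
    · simp only [if_pos hiJ]
      have hvi : Measurable (fun v : {m // m ∈ (Finset.Icc 1 N).erase n} → ℝ => v i) :=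
        measurable_pi_apply i
      exact ((hvi.const_mul b).add_const h).sub_const _
    · simp only [if_neg hiJ]; exact measurable_const

lemma measurable_numN (hm : ∀ n, Measurable (ω n)) (N : ℕ) (h b : ℝ) (n : ℕ) :
    Measurable (fun y => numN P Q τ ω N h b n y) := by
  refine Finset.measurable_sum _ fun J _ => ?_
  by_cases hnJ : n ∈ J
  · simp only [if_pos hnJ]
    exact (Measurable.exp (Finset.measurable_sum _ fun m _ =>
      (((hm m).const_mul b).add_const h).sub_const _)).mul_const _
  · simp only [if_neg hnJ]; exact measurable_const

lemma numN_nonneg (N : ℕ) (h b : ℝ) (n : ℕ) (y : Ω₂) :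
    0 ≤ numN P Q τ ω N h b n y := by
  refine Finset.sum_nonneg fun J _ => ?_
  by_cases hnJ : n ∈ J
  · simp only [if_pos hnJ]
    exact mul_nonneg (Real.exp_pos _).le (patP_nonneg P τ N J)
  · simp only [if_neg hnJ]; exact le_refl 0

lemma numN_le_zSum (N : ℕ) (h b : ℝ) (n : ℕ) (y : Ω₂) :
    numN P Q τ ω N h b n y ≤ zSum P Q τ ω N h b y := by
  rw [numN, zSum]
  refine Finset.sum_le_sum fun J _ => ?_
  by_cases hnJ : n ∈ J
  · simp only [if_pos hnJ]; exact le_rfl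
  · simp only [if_neg hnJ]
    exact mul_nonneg (Real.exp_pos _).le (patP_nonneg P τ N J)

lemma zDer_decomp (N : ℕ) (h b : ℝ) (y : Ω₂) :
    zDer P Q τ ω N h b y
      = ∑ n ∈ Finset.Icc 1 N, (ω n y - cQ Q ω b) * numN P Q τ ω N h b n y := by
  rw [zDer]
  have hstep : ∀ J ∈ (Finset.Icc 1 N).powerset,
      Real.exp (∑ m ∈ J, (b * ω m y + h - Real.log (pinMgf Q ω b)))
        * (∑ n ∈ J, (ω n y - cQ Q ω b)) * patP P τ N J
      = ∑ n ∈ Finset.Icc 1 N, (if n ∈ J then (ω n y - cQ Q ω b)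
          * (Real.exp (∑ m ∈ J, (b * ω m y + h - Real.log (pinMgf Q ω b)))
            * patP P τ N J) else 0) := by
    intro J hJ
    have hJsub := Finset.mem_powerset.mp hJ
    have h1 : (∑ n ∈ J, (ω n y - cQ Q ω b))
        = ∑ n ∈ Finset.Icc 1 N, (if n ∈ J then (ω n y - cQ Q ω b) else 0) := by
      rw [Finset.sum_ite_mem, Finset.inter_eq_right.mpr hJsub]
    rw [h1, Finset.mul_sum, Finset.sum_mul]
    refine Finset.sum_congr rfl fun n _ => ?_
    by_cases hnJ : n ∈ J
    · simp only [if_pos hnJ]; ring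
    · simp only [if_neg hnJ, mul_zero, zero_mul]
  rw [Finset.sum_congr rfl hstep, Finset.sum_comm]
  refine Finset.sum_congr rfl fun n _ => ?_
  rw [numN, Finset.mul_sum]
  refine Finset.sum_congr rfl fun J _ => ?_
  by_cases hnJ : n ∈ J
  · simp only [if_pos hnJ]
  · simp only [if_neg hnJ, mul_zero]

lemma integrable_term (hτ : ∀ j, Measurable (τ j)) (hm : ∀ n, Measurable (ω n))
    (hid : ∀ n, IdentDistrib (ω n) (ω 1) Q Q)
    (hint : ∀ t : ℝ, Integrable (fun y => Real.exp (t * ω 1 y)) Q)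
    (N : ℕ) (h b : ℝ) (n : ℕ)
    (hpos : 0 < (P {x | ∃ j, τ j x = N}).toReal) :
    Integrable (fun y => (ω n y - cQ Q ω b)
      * (numN P Q τ ω N h b n y / zSum P Q τ ω N h b y)) Q := by
  refine Integrable.mono' (g := fun y => |ω n y| + |cQ Q ω b|)
    (((integrable_omega Q ω hm hid hint n).abs).add (integrable_const _))
    (((hm n).sub_const _).mul ((measurable_numN P Q τ ω hm N h b n).div
      (measurable_zSum P Q τ ω hm N h b))).aestronglyMeasurable
    (Filter.Eventually.of_forall fun y => ?_)
  rw [Real.norm_eq_abs, abs_mul]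
  have hz := zSum_pos P Q τ ω hτ N h b y hpos
  have hr1 : 0 ≤ numN P Q τ ω N h b n y / zSum P Q τ ω N h b y :=
    div_nonneg (numN_nonneg P Q τ ω N h b n y) hz.le
  have hr2 : numN P Q τ ω N h b n y / zSum P Q τ ω N h b y ≤ 1 :=
    (div_le_one hz).mpr (numN_le_zSum P Q τ ω N h b n y)
  calc |ω n y - cQ Q ω b| * |numN P Q τ ω N h b n y / zSum P Q τ ω N h b y|
      ≤ |ω n y - cQ Q ω b| * 1 := by
        refine mul_le_mul_of_nonneg_left ?_ (abs_nonneg _)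
        rw [abs_of_nonneg hr1]; exact hr2
    _ ≤ |ω n y| + |cQ Q ω b| := by rw [mul_one]; exact abs_sub _ _

lemma transfer_le {α : Type*} [MeasurableSpace α] (X : Ω₂ → ℝ) (V : Ω₂ → α)
    (hX : Measurable X) (hV : Measurable V) (hIndep : IndepFun X V Q)
    {β : ℝ} (hβ : 0 ≤ β) (c : ℝ) (A B : α → ℝ) (hA : ∀ v, 0 ≤ A v) (hB : ∀ v, 0 ≤ B v)
    (hAm : Measurable A) (hBm : Measurable B)
    (hw : Integrable (fun y => Real.exp (β * X y)) Q)
    (hXi : Integrable X Q)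
    (htw : Integrable (fun y => X y * Real.exp (β * X y)) Q)
    (hc : c = (∫ y, X y * Real.exp (β * X y) ∂Q) / (∫ y, Real.exp (β * X y) ∂Q)) :
    ∫ y, (X y - c) * (Real.exp (β * X y) * A (V y)
        / (Real.exp (β * X y) * A (V y) + B (V y))) ∂Q ≤ 0 := by
  have hprobX : IsProbabilityMeasure (Measure.map X Q) :=
    Measure.isProbabilityMeasure_map hX.aemeasurable
  have hprobV : IsProbabilityMeasure (Measure.map V Q) :=
    Measure.isProbabilityMeasure_map hV.aemeasurable
  have hmapPair : Measure.map (fun y => (X y, V y)) Q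
      = (Measure.map X Q).prod (Measure.map V Q) :=
    (ProbabilityTheory.indepFun_iff_map_prod_eq_prod_map_map hX.aemeasurable
      hV.aemeasurable).mp hIndep
  have hwX : Integrable (fun t => Real.exp (β * t)) (Measure.map X Q) :=
    (integrable_map_measure ((measurable_id.const_mul β).exp).aestronglyMeasurable
      hX.aemeasurable).mpr hw
  have hidX : Integrable (fun t => t) (Measure.map X Q) :=
    (integrable_map_measure measurable_id.aestronglyMeasurable hX.aemeasurable).mpr hXi
  have htwX : Integrable (fun t => t * Real.exp (β * t)) (Measure.map X Q) :=
    (integrable_map_measure (measurable_id.mul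
      ((measurable_id.const_mul β).exp)).aestronglyMeasurable hX.aemeasurable).mpr htw
  have hceq : c = (∫ t, t * Real.exp (β * t) ∂(Measure.map X Q))
      / (∫ t, Real.exp (β * t) ∂(Measure.map X Q)) := by
    rw [hc]
    congr 1
    · exact (integral_map hX.aemeasurable (measurable_id.mul
        ((measurable_id.const_mul β).exp)).aestronglyMeasurable).symm
    · exact (integral_map hX.aemeasurable
        ((measurable_id.const_mul β).exp).aestronglyMeasurable).symm
  have hΦm : Measurable (fun z : ℝ × α => (z.1 - c) * (Real.exp (β * z.1) * A z.2
      / (Real.exp (β * z.1) * A z.2 + B z.2))) := by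
    refine (measurable_fst.sub_const c).mul ?_
    refine Measurable.div ?_ ?_
    · exact ((measurable_fst.const_mul β).exp).mul (hAm.comp measurable_snd)
    · exact (((measurable_fst.const_mul β).exp).mul (hAm.comp measurable_snd)).add
        (hBm.comp measurable_snd)
  have hratio : ∀ z : ℝ × α, 0 ≤ Real.exp (β * z.1) * A z.2
      / (Real.exp (β * z.1) * A z.2 + B z.2) ∧ Real.exp (β * z.1) * A z.2
      / (Real.exp (β * z.1) * A z.2 + B z.2) ≤ 1 :=
    fun z => phi_mem_Icc (Real.exp_pos _) (hA z.2) (hB z.2)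
  have hΦint : Integrable (fun z : ℝ × α => (z.1 - c) * (Real.exp (β * z.1) * A z.2
      / (Real.exp (β * z.1) * A z.2 + B z.2)))
      ((Measure.map X Q).prod (Measure.map V Q)) := by
    refine Integrable.mono' (g := fun z => |z.1 - c| * 1)
      (((hidX.sub (integrable_const c)).abs).mul_prod (integrable_const 1))
      hΦm.aestronglyMeasurable (Filter.Eventually.of_forall fun z => ?_)
    simp only [Real.norm_eq_abs, abs_mul]
    refine mul_le_mul_of_nonneg_left ?_ (abs_nonneg _)
    rw [abs_of_nonneg (hratio z).1]
    exact (hratio z).2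
  calc ∫ y, (X y - c) * (Real.exp (β * X y) * A (V y)
        / (Real.exp (β * X y) * A (V y) + B (V y))) ∂Q
      = ∫ z, (fun z : ℝ × α => (z.1 - c) * (Real.exp (β * z.1) * A z.2
          / (Real.exp (β * z.1) * A z.2 + B z.2))) z
          ∂(Measure.map (fun y => (X y, V y)) Q) :=
        (integral_map (hX.prodMk hV).aemeasurable hΦm.aestronglyMeasurable).symm
    _ = ∫ z, (fun z : ℝ × α => (z.1 - c) * (Real.exp (β * z.1) * A z.2
          / (Real.exp (β * z.1) * A z.2 + B z.2))) z
          ∂((Measure.map X Q).prod (Measure.map V Q)) := by rw [hmapPair]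
    _ = ∫ v, ∫ t, (t - c) * (Real.exp (β * t) * A v
          / (Real.exp (β * t) * A v + B v)) ∂(Measure.map X Q)
          ∂(Measure.map V Q) := integral_prod_symm _ hΦint
    _ ≤ 0 := by
        refine integral_nonpos fun v => ?_
        have := oneDim_key (Measure.map X Q) hβ hwX hidX htwX (hA v) (hB v)
        rw [← hceq] at this
        exact this

lemma term_nonpos (hm : ∀ n, Measurable (ω n))
    (hiID : iIndepFun ω Q)
    (hid : ∀ n, IdentDistrib (ω n) (ω 1) Q Q)
    (hint : ∀ t : ℝ, Integrable (fun y => Real.exp (t * ω 1 y)) Q)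
    (N : ℕ) (h : ℝ) {β : ℝ} (hβ : 0 ≤ β) (n : ℕ) :
    ∫ y, (ω n y - cQ Q ω β) * (numN P Q τ ω N h β n y / zSum P Q τ ω N h β y) ∂Q ≤ 0 := by
  have hpoint : ∀ y, (ω n y - cQ Q ω β) * (numN P Q τ ω N h β n y / zSum P Q τ ω N h β y)
      = (ω n y - cQ Q ω β) * (Real.exp (β * ω n y)
          * phiA P Q τ ω N h β n (fun i => ω i y)
          / (Real.exp (β * ω n y) * phiA P Q τ ω N h β n (fun i => ω i y)
            + phiB P Q τ ω N h β n (fun i => ω i y))) := by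
    intro y
    rw [numN_eq P Q τ ω N h β n y, zSum_eq_AB P Q τ ω N h β n y]
  rw [integral_congr_ae (Filter.Eventually.of_forall hpoint)]
  have hdisj : Disjoint ({n} : Finset ℕ) ((Finset.Icc 1 N).erase n) :=
    Finset.disjoint_singleton_left.mpr (Finset.notMem_erase n _)
  have h0 := hiID.indepFun_finset {n} ((Finset.Icc 1 N).erase n) hdisj hm
  have hIndep : IndepFun (ω n)
      (fun y (i : {m // m ∈ (Finset.Icc 1 N).erase n}) => ω i y) Q := by
    have h1 := h0.comp (φ := fun u : (({n} : Finset ℕ) : Type) → ℝ =>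
      u ⟨n, Finset.mem_singleton_self n⟩) (ψ := id) (measurable_pi_apply _ : Measurable fun u : (({n} : Finset ℕ) : Type) → ℝ =>
        u ⟨n, Finset.mem_singleton_self n⟩) measurable_id
    exact h1
  have hVmeas : Measurable (fun y (i : {m // m ∈ (Finset.Icc 1 N).erase n}) => ω i y) :=
    measurable_pi_lambda _ fun i => hm i
  have hXw : Integrable (fun y => Real.exp (β * ω n y)) Q :=
    ((hid n).comp ((measurable_id.const_mul β).exp)).integrable_iff.mpr (hint β)
  have htw1 : Integrable (fun y => ω 1 y * Real.exp (β * ω 1 y)) Q := by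
    refine Integrable.mono' (((hint (β + 1)).add (hint (β - 1))).const_mul 2)
      ((hm 1).mul ((hm 1).const_mul β).exp).aestronglyMeasurable
      (Filter.Eventually.of_forall fun y => ?_)
    rw [Real.norm_eq_abs]
    exact abs_mul_exp_le (ω 1 y) le_rfl le_rfl
  have hXtw : Integrable (fun y => ω n y * Real.exp (β * ω n y)) Q :=
    ((hid n).comp (measurable_id.mul
      ((measurable_id.const_mul β).exp))).integrable_iff.mpr htw1
  have hXi : Integrable (ω n) Q := integrable_omega Q ω hm hid hint n
  have hceq : cQ Q ω β
      = (∫ y, ω n y * Real.exp (β * ω n y) ∂Q) / (∫ y, Real.exp (β * ω n y) ∂Q) := by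
    rw [cQ, pinMgf]
    congr 1
    · exact ((hid n).comp (measurable_id.mul
        ((measurable_id.const_mul β).exp))).integral_eq.symm
    · exact ((hid n).comp ((measurable_id.const_mul β).exp)).integral_eq.symm
  exact transfer_le Q (ω n) _ (hm n) hVmeas hIndep hβ (cQ Q ω β)
    (phiA P Q τ ω N h β n) (phiB P Q τ ω N h β n)
    (phiA_nonneg P Q τ ω N h β n) (phiB_nonneg P Q τ ω N h β n)
    (measurable_phiA P Q τ ω N h β n) (measurable_phiB P Q τ ω N h β n)
    hXw hXi hXtw hceq

lemma integral_zDer_div_nonpos (hτ : ∀ j, Measurable (τ j)) (hm : ∀ n, Measurable (ω n))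
    (hiID : iIndepFun ω Q)
    (hid : ∀ n, IdentDistrib (ω n) (ω 1) Q Q)
    (hint : ∀ t : ℝ, Integrable (fun y => Real.exp (t * ω 1 y)) Q)
    (N : ℕ) (h : ℝ) (hpos : 0 < (P {x | ∃ j, τ j x = N}).toReal)
    {β : ℝ} (hβ : 0 ≤ β) :
    ∫ y, zDer P Q τ ω N h β y / zSum P Q τ ω N h β y ∂Q ≤ 0 := by
  have hdecomp : ∀ y : Ω₂, zDer P Q τ ω N h β y / zSum P Q τ ω N h β y
      = ∑ n ∈ Finset.Icc 1 N, (ω n y - cQ Q ω β)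
          * (numN P Q τ ω N h β n y / zSum P Q τ ω N h β y) := by
    intro y
    rw [zDer_decomp P Q τ ω N h β y, Finset.sum_div]
    exact Finset.sum_congr rfl fun n _ => mul_div_assoc _ _ _
  rw [integral_congr_ae (Filter.Eventually.of_forall hdecomp),
    integral_finset_sum _ (fun n _ => integrable_term P Q τ ω hτ hm hid hint N h β n hpos)]
  exact Finset.sum_nonpos fun n _ => term_nonpos P Q τ ω hm hiID hid hint N h hβ n

end Main

lemma prob_renewal_pos [MeasurableSpace Ω₁] (P : Measure Ω₁) [IsProbabilityMeasure P]
    (τ : ℕ → Ω₁ → ℕ) (K : ℕ → ℝ) (L : ℝ → ℝ) (α : ℝ)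
    (hτ0 : ∀ x, τ 0 x = 0) (hK : ∀ n, K n = (P {x | τ 1 x = n}).toReal)
    (hLpos : ∀ x : ℝ, 0 < x → 0 < L x)
    (htail : ∀ n : ℕ, 1 ≤ n → K n = L n / (n : ℝ) ^ (1 + α)) (N : ℕ) :
    0 < (P {x | ∃ j, τ j x = N}).toReal := by
  rcases Nat.eq_zero_or_pos N with hN | hN
  · subst hN
    have huniv : {x : Ω₁ | ∃ j, τ j x = 0} = Set.univ := by
      ext x
      simp only [Set.mem_setOf_eq, Set.mem_univ, iff_true]
      exact ⟨0, hτ0 x⟩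
    rw [huniv, measure_univ, ENNReal.toReal_one]
    norm_num
  · have hKpos : 0 < K N := by
      rw [htail N hN]
      have hNpos : (0:ℝ) < N := by exact_mod_cast hN
      exact div_pos (hLpos _ hNpos) (Real.rpow_pos_of_pos hNpos _)
    rw [hK N] at hKpos
    have hsub : {x : Ω₁ | τ 1 x = N} ⊆ {x : Ω₁ | ∃ j, τ j x = N} := fun x hx => ⟨1, hx⟩
    have hle : P {x | τ 1 x = N} ≤ P {x | ∃ j, τ j x = N} := measure_mono hsub
    have hfin : P {x | ∃ j, τ j x = N} ≠ ⊤ := measure_ne_top P _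
    exact lt_of_lt_of_le hKpos (ENNReal.toReal_mono hfin hle)

end Stmt5

/-- the finite-volume monotonicity behind Proposition 6.1:
`β ↦ 𝔼[log Z_{N,ω}(β,h)]` is non-increasing on `[0,∞)`; equivalently its derivative equals
`𝔼[(∂/∂β) log Z_{N,ω}(β,h)]` and is `≤ 0`. -/
theorem statement5
    {Ω₁ Ω₂ : Type*} [MeasurableSpace Ω₁] [MeasurableSpace Ω₂]
    (P : Measure Ω₁) (Q : Measure Ω₂) (τ : ℕ → Ω₁ → ℕ) (ω : ℕ → Ω₂ → ℝ)
    (K : ℕ → ℝ) (L : ℝ → ℝ) (α : ℝ)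
    (hren : IsRenewal P τ K) (hdis : IsDisorder Q ω)
    (hL : SlowlyVarying L) (hα : 0 ≤ α) (htail : HasRegVaryingTail K L α) :
    ∀ (N : ℕ) (h : ℝ),
      AntitoneOn (fun β => ∫ y, Real.log (pinZ P Q τ ω N β h y) ∂Q) (Ici 0) ∧
      ∀ β : ℝ, 0 ≤ β →
        deriv (fun b => ∫ y, Real.log (pinZ P Q τ ω N b h y) ∂Q) β
            = ∫ y, deriv (fun b => Real.log (pinZ P Q τ ω N b h y)) β ∂Q ∧
        deriv (fun b => ∫ y, Real.log (pinZ P Q τ ω N b h y) ∂Q) β ≤ 0 := by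
  obtain ⟨hPprob, hτ0, hτm, hmono, hτind, hτid, hK⟩ := hren
  obtain ⟨hQprob, hm, hiID, hid, hcent, hvar, hint⟩ := hdis
  haveI := hPprob; haveI := hQprob
  intro N h
  have hpos : 0 < (P {x | ∃ j, τ j x = N}).toReal :=
    Stmt5.prob_renewal_pos P τ K L α hτ0 hK hL.2.1 htail N
  have hfun : (fun b => ∫ y, Real.log (pinZ P Q τ ω N b h y) ∂Q)
      = fun b => ∫ y, Real.log (Stmt5.zSum P Q τ ω N h b y) ∂Q := by
    funext b
    refine integral_congr_ae (Filter.Eventually.of_forall fun y => ?_)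
    show Real.log (pinZ P Q τ ω N b h y) = Real.log (Stmt5.zSum P Q τ ω N h b y)
    rw [Stmt5.pinZ_eq_zSum P Q τ ω hτm N b h y]
  have hkey : ∀ β : ℝ,
      HasDerivAt (fun b => ∫ y, Real.log (Stmt5.zSum P Q τ ω N h b y) ∂Q)
        (∫ y, Stmt5.zDer P Q τ ω N h β y / Stmt5.zSum P Q τ ω N h β y ∂Q) β :=
    fun β =>
      (Stmt5.hasDerivAt_integral_log_zSum P Q τ ω hτm hm hid hint hcent N h hpos β).2
  have hsign : ∀ β : ℝ, 0 ≤ β →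
      (∫ y, Stmt5.zDer P Q τ ω N h β y / Stmt5.zSum P Q τ ω N h β y ∂Q) ≤ 0 :=
    fun β hβ =>
      Stmt5.integral_zDer_div_nonpos P Q τ ω hτm hm hiID hid hint N h hpos hβ
  constructor
  · rw [hfun]
    refine antitoneOn_of_deriv_nonpos (convex_Ici 0) ?_ ?_ ?_
    · exact fun x _ => ((hkey x).differentiableAt).continuousAt.continuousWithinAt
    · intro x _
      exact ((hkey x).differentiableAt).differentiableWithinAt
    · intro x hx
      rw [(hkey x).deriv]
      rw [interior_Ici] at hx
      exact hsign x (le_of_lt hx)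
  · intro β hβ
    have hderivEq : deriv (fun b => ∫ y, Real.log (pinZ P Q τ ω N b h y) ∂Q) β
        = ∫ y, Stmt5.zDer P Q τ ω N h β y / Stmt5.zSum P Q τ ω N h β y ∂Q := by
      rw [hfun]
      exact (hkey β).deriv
    constructor
    · rw [hderivEq]
      refine integral_congr_ae (Filter.Eventually.of_forall fun y => ?_)
      show Stmt5.zDer P Q τ ω N h β y / Stmt5.zSum P Q τ ω N h β y
          = deriv (fun b => Real.log (pinZ P Q τ ω N b h y)) β
      have hfy : (fun b => Real.log (pinZ P Q τ ω N b h y))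
          = fun b => Real.log (Stmt5.zSum P Q τ ω N h b y) := by
        funext b
        rw [Stmt5.pinZ_eq_zSum P Q τ ω hτm N b h y]
      rw [hfy]
      exact ((Stmt5.hasDerivAt_log_zSum P Q τ ω hτm hm hint N h y β hpos).deriv).symm
    · rw [hderivEq]
      exact hsign β hβ

end
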